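/- arXiv:2401.09747 — 3 statements merged into one kernel-verified Lean document; each statement's English description precedes it below -/
import Mathlib

section
/- Suppose γ ≥ 1, p* > 1, L_f > 0, C > 0, and f : ℝ×ℝ^d → ℝ^d, g : ℝ×ℝ^d → ℝ^{d×m} satisfy, for all x,y ∈ ℝ^d and s,t ∈ ℝ: (i) ⟨x−y, f(t,x)−f(s,y)⟩ + (p*−1)|g(t,x)−g(s,y)|² ≤ L_f|x−y|² + C(1+|x|+|y|)^{γ+1}|t−s|, and (ii) |f(t,x)−f(s,y)| ≤ C((1+|x|+|y|)^{γ−1}|x−y| + (1+|x|+|y|)^{γ}|t−s|). Then there exists a constant C' > 0 such that |g(t,x)−g(s,y)|² ≤ C'(1+|x|+|y|)^{γ−1}|x−y|² + C'(1+|x|+|y|)^{γ+1}|t−s| for all x,y ∈ ℝ^d and s,t ∈ ℝ. -/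
/-- The Euclidean norm on `Fin n → ℝ`. -/
noncomputable def vnorm {n : ℕ} (x : Fin n → ℝ) : ℝ := Real.sqrt (∑ i, x i ^ 2)

/-- The Euclidean inner product on `Fin n → ℝ`. -/
def vinner {n : ℕ} (x y : Fin n → ℝ) : ℝ := ∑ i, x i * y i

/-- The Frobenius (trace) norm of a real `d × m` matrix. -/
noncomputable def mnorm {d m : ℕ} (M : Matrix (Fin d) (Fin m) ℝ) : ℝ :=
  Real.sqrt (∑ i, ∑ j, M i j ^ 2)

lemma vnorm_eq_norm {n : ℕ} (x : Fin n → ℝ) :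
    vnorm x = ‖(WithLp.equiv 2 (Fin n → ℝ)).symm x‖ := by
  rw [EuclideanSpace.norm_eq, vnorm]
  simp [Real.norm_eq_abs, sq_abs]

lemma vnorm_nonneg {n : ℕ} (x : Fin n → ℝ) : 0 ≤ vnorm x := Real.sqrt_nonneg _

lemma vnorm_sub_le {n : ℕ} (x y : Fin n → ℝ) : vnorm (x - y) ≤ vnorm x + vnorm y := by
  rw [vnorm_eq_norm, vnorm_eq_norm, vnorm_eq_norm]
  have : (WithLp.equiv 2 (Fin n → ℝ)).symm (x - y)
      = (WithLp.equiv 2 (Fin n → ℝ)).symm x - (WithLp.equiv 2 (Fin n → ℝ)).symm y := rfl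
  rw [this]
  exact norm_sub_le _ _

lemma vinner_eq {n : ℕ} (x y : Fin n → ℝ) :
    vinner x y = inner ℝ ((WithLp.equiv 2 (Fin n → ℝ)).symm x)
      ((WithLp.equiv 2 (Fin n → ℝ)).symm y) := by
  rw [vinner, PiLp.inner_apply]
  simp [mul_comm]

lemma abs_vinner_le {n : ℕ} (x y : Fin n → ℝ) : |vinner x y| ≤ vnorm x * vnorm y := by
  rw [vinner_eq, vnorm_eq_norm, vnorm_eq_norm]
  exact abs_real_inner_le_norm _ _

lemma mnorm_sq_nonneg {d m : ℕ} (M : Matrix (Fin d) (Fin m) ℝ) : 0 ≤ mnorm M ^ 2 :=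
  sq_nonneg _

/-- under the coupled monotonicity-type condition (i) and the polynomial
Lipschitz condition (ii) on `f`, the diffusion coefficient `g` satisfies a polynomial
Lipschitz-type estimate in space and time. -/
theorem diffusion_polynomial_lipschitz (d m : ℕ) (gam pstar Lf C : ℝ)
    (hgam : 1 ≤ gam) (hp : 1 < pstar) (hLf : 0 < Lf) (hC : 0 < C)
    (f : ℝ → (Fin d → ℝ) → (Fin d → ℝ))
    (g : ℝ → (Fin d → ℝ) → Matrix (Fin d) (Fin m) ℝ)
    (h1 : ∀ (t s : ℝ) (x y : Fin d → ℝ),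
      vinner (x - y) (f t x - f s y) + (pstar - 1) * mnorm (g t x - g s y) ^ 2 ≤
        Lf * vnorm (x - y) ^ 2 + C * (1 + vnorm x + vnorm y) ^ (gam + 1) * |t - s|)
    (h2 : ∀ (t s : ℝ) (x y : Fin d → ℝ),
      vnorm (f t x - f s y) ≤
        C * ((1 + vnorm x + vnorm y) ^ (gam - 1) * vnorm (x - y)
          + (1 + vnorm x + vnorm y) ^ gam * |t - s|)) :
    ∃ C' : ℝ, 0 < C' ∧
      ∀ (t s : ℝ) (x y : Fin d → ℝ),
        mnorm (g t x - g s y) ^ 2 ≤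
          C' * (1 + vnorm x + vnorm y) ^ (gam - 1) * vnorm (x - y) ^ 2
            + C' * (1 + vnorm x + vnorm y) ^ (gam + 1) * |t - s| := by
  have hp1 : 0 < pstar - 1 := by linarith
  refine ⟨(Lf + 2 * C) / (pstar - 1), by positivity, ?_⟩
  intro t s x y
  set A : ℝ := 1 + vnorm x + vnorm y with hA
  have hA1 : 1 ≤ A := by
    have := vnorm_nonneg x; have := vnorm_nonneg y; simp [hA]; linarith
  have hA0 : 0 < A := by linarith
  set N : ℝ := vnorm (x - y) with hN
  set τ : ℝ := |t - s| with hτ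
  have hτ0 : 0 ≤ τ := abs_nonneg _
  have hN0 : 0 ≤ N := vnorm_nonneg _
  have hNA : N ≤ A := by
    have := vnorm_sub_le x y; simp [hN, hA]; linarith
  have hPg : (1:ℝ) ≤ A ^ (gam - 1) := Real.one_le_rpow hA1 (by linarith)
  have hPg0 : (0:ℝ) ≤ A ^ (gam - 1) := by positivity
  have hPg1 : (0:ℝ) ≤ A ^ (gam + 1) := by positivity
  have hPgam : (0:ℝ) ≤ A ^ gam := by positivity
  -- Cauchy–Schwarz bound on the inner product term
  have hCS : |vinner (x - y) (f t x - f s y)| ≤ N * vnorm (f t x - f s y) :=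
    abs_vinner_le _ _
  have hf := h2 t s x y
  have hfn : 0 ≤ vnorm (f t x - f s y) := vnorm_nonneg _
  have hinner : -(vinner (x - y) (f t x - f s y)) ≤
      C * (A ^ (gam - 1) * N ^ 2 + A ^ gam * N * τ) := by
    have h4 : N * vnorm (f t x - f s y) ≤
        N * (C * (A ^ (gam - 1) * N + A ^ gam * τ)) :=
      mul_le_mul_of_nonneg_left hf hN0
    calc -(vinner (x - y) (f t x - f s y)) ≤ |vinner (x - y) (f t x - f s y)| :=
          neg_le_abs _
      _ ≤ N * vnorm (f t x - f s y) := hCS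
      _ ≤ N * (C * (A ^ (gam - 1) * N + A ^ gam * τ)) := h4
      _ = C * (A ^ (gam - 1) * N ^ 2 + A ^ gam * N * τ) := by ring
  have hmain := h1 t s x y
  -- Bound A^gam * N * τ ≤ A^(gam+1) * τ
  have hAN : A ^ gam * N * τ ≤ A ^ (gam + 1) * τ := by
    have : A ^ gam * N ≤ A ^ gam * A := mul_le_mul_of_nonneg_left hNA hPgam
    have hpow : A ^ gam * A = A ^ (gam + 1) := by
      rw [Real.rpow_add hA0, Real.rpow_one]
    nlinarith
  -- Bound Lf * N^2 ≤ Lf * A^(gam-1) * N^2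
  have hLfN : Lf * N ^ 2 ≤ Lf * (A ^ (gam - 1) * N ^ 2) := by
    nlinarith [mul_nonneg (mul_nonneg hLf.le (sq_nonneg N)) (sub_nonneg.2 hPg)]
  have hkey : (pstar - 1) * mnorm (g t x - g s y) ^ 2 ≤
      (Lf + C) * (A ^ (gam - 1) * N ^ 2) + 2 * C * (A ^ (gam + 1) * τ) := by
    nlinarith [hmain, hinner, hAN, hLfN]
  have hfinal : (pstar - 1) * mnorm (g t x - g s y) ^ 2 ≤
      (pstar - 1) * ((Lf + 2 * C) / (pstar - 1) * A ^ (gam - 1) * N ^ 2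
        + (Lf + 2 * C) / (pstar - 1) * A ^ (gam + 1) * τ) := by
    have hrw : (pstar - 1) * ((Lf + 2 * C) / (pstar - 1) * A ^ (gam - 1) * N ^ 2
          + (Lf + 2 * C) / (pstar - 1) * A ^ (gam + 1) * τ)
        = (Lf + 2 * C) * (A ^ (gam - 1) * N ^ 2) + (Lf + 2 * C) * (A ^ (gam + 1) * τ) := by
      field_simp
    rw [hrw]
    refine hkey.trans (add_le_add ?_ ?_)
    · exact mul_le_mul_of_nonneg_right (by linarith) (mul_nonneg hPg0 (sq_nonneg N))
    · exact mul_le_mul_of_nonneg_right (by linarith) (mul_nonneg hPg1 hτ0)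
  exact le_of_mul_le_mul_left hfinal hp1
end

section
/- One-step lower estimate for the implicit part of the theta method (moment-bound form): Let A be a real symmetric d×d matrix with ⟨Ax, x⟩ ≥ λ|x|² for all x ∈ ℝ^d, λ > 0; let p* > 1, 0 < L̃ < λ, C̃ ≥ 0, θ ≥ 0, Δ ≥ 0, and suppose f : ℝ×ℝ^d → ℝ^d, g : ℝ×ℝ^d → ℝ^{d×m} satisfy ⟨x, f(t,x)⟩ + ((p*−1)/2)|g(t,x)|² ≤ L̃|x|² + C̃ for all x ∈ ℝ^d, t ∈ ℝ. Then for all x ∈ ℝ^d and t ∈ ℝ: |x − θΔ(−Ax + f(t,x))|² ≥ (1 + 2(λ−L̃)θΔ)|x|² + (p*−1)θΔ|g(t,x)|² + θ²Δ²|Ax − f(t,x)|² − 2C̃θΔ. -/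
lemma vnorm_sq {n : ℕ} (x : Fin n → ℝ) : vnorm x ^ 2 = vinner x x := by
  unfold vnorm vinner
  rw [Real.sq_sqrt (Finset.sum_nonneg fun i _ => sq_nonneg _)]
  exact Finset.sum_congr rfl fun i _ => sq (x i)

lemma vinner_comm {n : ℕ} (x y : Fin n → ℝ) : vinner x y = vinner y x := by
  unfold vinner; exact Finset.sum_congr rfl fun i _ => mul_comm _ _

lemma vnorm_add_smul_sq {n : ℕ} (x v : Fin n → ℝ) (c : ℝ) :
    vnorm (x + c • v) ^ 2 = vinner x x + 2 * c * vinner x v + c ^ 2 * vinner v v := by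
  rw [vnorm_sq]
  unfold vinner
  simp only [Pi.add_apply, Pi.smul_apply, smul_eq_mul]
  rw [Finset.mul_sum, Finset.mul_sum, ← Finset.sum_add_distrib, ← Finset.sum_add_distrib]
  exact Finset.sum_congr rfl fun i _ => by ring

/-- one-step lower estimate for the implicit part of the theta method
(moment-bound form). -/
theorem theta_implicit_lower_moment (d m : ℕ) (A : Matrix (Fin d) (Fin d) ℝ)
    (lam pstar Ltil Ctil θ Δ : ℝ) (hAsymm : A.IsSymm) (hlam : 0 < lam)
    (hA : ∀ x : Fin d → ℝ, lam * vnorm x ^ 2 ≤ vinner (A.mulVec x) x)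
    (hp : 1 < pstar) (hLtil0 : 0 < Ltil) (hLtil : Ltil < lam) (hCtil : 0 ≤ Ctil)
    (hθ : 0 ≤ θ) (hΔ : 0 ≤ Δ)
    (f : ℝ → (Fin d → ℝ) → (Fin d → ℝ))
    (g : ℝ → (Fin d → ℝ) → Matrix (Fin d) (Fin m) ℝ)
    (hmono : ∀ (t : ℝ) (x : Fin d → ℝ),
      vinner x (f t x) + (pstar - 1) / 2 * mnorm (g t x) ^ 2 ≤ Ltil * vnorm x ^ 2 + Ctil) :
    ∀ (x : Fin d → ℝ) (t : ℝ),
      (1 + 2 * (lam - Ltil) * θ * Δ) * vnorm x ^ 2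
          + (pstar - 1) * θ * Δ * mnorm (g t x) ^ 2
          + θ ^ 2 * Δ ^ 2 * vnorm (A.mulVec x - f t x) ^ 2
          - 2 * Ctil * θ * Δ ≤
        vnorm (x - (θ * Δ) • (-(A.mulVec x) + f t x)) ^ 2 := by
  intro x t
  have hx : x - (θ * Δ) • (-(A.mulVec x) + f t x) = x + (θ * Δ) • (A.mulVec x - f t x) := by
    funext i; simp [sub_eq_add_neg]; ring
  rw [hx, vnorm_add_smul_sq, ← vnorm_sq, ← vnorm_sq]
  have hxAf : vinner x (A.mulVec x - f t x) = vinner (A.mulVec x) x - vinner x (f t x) := by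
    rw [vinner_comm (A.mulVec x) x]
    unfold vinner
    rw [← Finset.sum_sub_distrib]
    exact Finset.sum_congr rfl fun i _ => by simp [Pi.sub_apply]; ring
  have h1 := hA x
  have h2 := hmono t x
  have hcd : 0 ≤ θ * Δ := mul_nonneg hθ hΔ
  have key : lam * vnorm x ^ 2 - Ltil * vnorm x ^ 2 - Ctil + (pstar - 1) / 2 * mnorm (g t x) ^ 2
      ≤ vinner x (A.mulVec x - f t x) := by
    rw [hxAf]; linarith
  nlinarith [mul_le_mul_of_nonneg_left key hcd]
end

section
/- Coupled monotonicity condition for the example SDE: Let a > 0, b, c, d ∈ ℝ and p* > 1 with 12d²(p*−1) ≤ a. Define f(t,x) = −a x³(1 + sin(πt)) and g(t,x) = b + cx + d x²(1 + sin(πt)) for t, x ∈ ℝ. Then for all x, y, s, t ∈ ℝ: (x−y)(f(t,x) − f(s,y)) + (p*−1)(g(t,x) − g(s,y))² ≤ 3c²(p*−1)(x−y)² + (2aπ + 6πd²(p*−1))(1 + x⁴ + y⁴)|t−s|. -/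
set_option maxHeartbeats 1000000


/-- coupled monotonicity condition for the example SDE with
`f(t,x) = -a x³ (1 + sin(π t))` and `g(t,x) = b + c x + d x² (1 + sin(π t))`,
under the requirement `12 d² (p* − 1) ≤ a`. -/
theorem example_coupled_monotonicity (a b c d pstar : ℝ)
    (ha : 0 < a) (hp : 1 < pstar) (hd : 12 * d ^ 2 * (pstar - 1) ≤ a)
    (f g : ℝ → ℝ → ℝ)
    (hf : ∀ t x, f t x = -a * x ^ 3 * (1 + Real.sin (Real.pi * t)))
    (hg : ∀ t x, g t x = b + c * x + d * x ^ 2 * (1 + Real.sin (Real.pi * t))) :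
    ∀ x y s t : ℝ,
      (x - y) * (f t x - f s y) + (pstar - 1) * (g t x - g s y) ^ 2 ≤
        3 * c ^ 2 * (pstar - 1) * (x - y) ^ 2
          + (2 * a * Real.pi + 6 * Real.pi * d ^ 2 * (pstar - 1))
            * (1 + x ^ 4 + y ^ 4) * |t - s| := by
  intro x y s t
  simp only [hf, hg]
  set u := Real.sin (Real.pi * t) with hu_def
  set v := Real.sin (Real.pi * s) with hv_def
  have hπ := Real.pi_pos
  have hp0 : (0:ℝ) ≤ pstar - 1 := by linarith
  have hK : (0:ℝ) ≤ (pstar - 1) * d ^ 2 := mul_nonneg hp0 (sq_nonneg d)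
  have hu1 : |u| ≤ 1 := Real.abs_sin_le_one _
  have hv1 : |v| ≤ 1 := Real.abs_sin_le_one _
  obtain ⟨hu_lo, hu_hi⟩ := abs_le.mp hu1
  obtain ⟨hv_lo, hv_hi⟩ := abs_le.mp hv1
  have hD : |u - v| ≤ Real.pi * |t - s| := by
    have key : |u - v| ≤ |Real.pi * t - Real.pi * s| := by
      rw [hu_def, hv_def, Real.sin_sub_sin, abs_mul, abs_mul, abs_two]
      have h1 : |Real.sin ((Real.pi * t - Real.pi * s) / 2)|
          ≤ |Real.pi * t - Real.pi * s| / 2 := by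
        have := Real.abs_sin_le_abs (x := (Real.pi * t - Real.pi * s) / 2)
        rwa [abs_div, abs_two] at this
      have h2 : |Real.cos ((Real.pi * t + Real.pi * s) / 2)| ≤ 1 :=
        Real.abs_cos_le_one _
      nlinarith [abs_nonneg (Real.sin ((Real.pi * t - Real.pi * s) / 2)),
        abs_nonneg (Real.cos ((Real.pi * t + Real.pi * s) / 2)),
        abs_nonneg (Real.pi * t - Real.pi * s)]
    rwa [← mul_sub, abs_mul, abs_of_pos hπ] at key
  have hT : (0:ℝ) ≤ Real.pi * |t - s| := by positivity
  -- Claim 1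
  have hB : -a * (x ^ 2 + x * y + y ^ 2)
      + 3 * (pstar - 1) * d ^ 2 * (1 + u) * (x + y) ^ 2 ≤ 0 := by
    have hQ : (0:ℝ) ≤ x ^ 2 + x * y + y ^ 2 := by nlinarith [sq_nonneg (x + y), sq_nonneg x, sq_nonneg y]
    have hS : (0:ℝ) ≤ (x + y) ^ 2 := sq_nonneg _
    nlinarith [mul_nonneg (mul_nonneg hK hS) (by linarith : (0:ℝ) ≤ 2 - (1 + u)),
      mul_nonneg hK (by nlinarith [sq_nonneg x, sq_nonneg y] : (0:ℝ) ≤ 2 * (x ^ 2 + x * y + y ^ 2) - (x + y) ^ 2),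
      mul_nonneg hQ (by linarith : (0:ℝ) ≤ a - 12 * d ^ 2 * (pstar - 1))]
  have c1 : -a * (1 + u) * (x - y) * (x ^ 3 - y ^ 3)
      + 3 * (pstar - 1) * d ^ 2 * (1 + u) ^ 2 * (x ^ 2 - y ^ 2) ^ 2 ≤ 0 := by
    have heq : -a * (1 + u) * (x - y) * (x ^ 3 - y ^ 3)
        + 3 * (pstar - 1) * d ^ 2 * (1 + u) ^ 2 * (x ^ 2 - y ^ 2) ^ 2
        = ((1 + u) * (x - y) ^ 2) * (-a * (x ^ 2 + x * y + y ^ 2)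
            + 3 * (pstar - 1) * d ^ 2 * (1 + u) * (x + y) ^ 2) := by ring
    rw [heq]
    exact mul_nonpos_of_nonneg_of_nonpos
      (mul_nonneg (by linarith) (sq_nonneg _)) hB
  -- Claim 2
  have h2a : |y ^ 3 * (x - y)| ≤ 2 * (1 + x ^ 4 + y ^ 4) := by
    rw [abs_le]
    constructor
    · nlinarith [sq_nonneg (y ^ 2 + x * y), sq_nonneg (x ^ 2 - y ^ 2)]
    · nlinarith [sq_nonneg (y ^ 2 - x * y), sq_nonneg (x ^ 2 - y ^ 2)]
  have c2 : -a * y ^ 3 * (x - y) * (u - v)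
      ≤ 2 * a * Real.pi * (1 + x ^ 4 + y ^ 4) * |t - s| := by
    have h1 : -(y ^ 3 * (x - y) * (u - v)) ≤ 2 * (1 + x ^ 4 + y ^ 4) * (Real.pi * |t - s|) := by
      calc -(y ^ 3 * (x - y) * (u - v)) ≤ |y ^ 3 * (x - y) * (u - v)| := neg_le_abs _
        _ = |y ^ 3 * (x - y)| * |u - v| := abs_mul _ _
        _ ≤ 2 * (1 + x ^ 4 + y ^ 4) * (Real.pi * |t - s|) :=
            mul_le_mul h2a hD (abs_nonneg _) (by positivity)
    have := mul_le_mul_of_nonneg_left h1 ha.le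
    linarith [this]
  -- Claim 3
  have hD2 : (u - v) ^ 2 ≤ 2 * (Real.pi * |t - s|) := by
    have h2 : |u - v| ≤ 2 := abs_le.mpr ⟨by linarith, by linarith⟩
    calc (u - v) ^ 2 = |u - v| * |u - v| := by rw [abs_mul_abs_self]; ring
      _ ≤ 2 * (Real.pi * |t - s|) := mul_le_mul h2 hD (abs_nonneg _) (by norm_num)
  have c3 : 3 * (pstar - 1) * d ^ 2 * y ^ 4 * (u - v) ^ 2
      ≤ 6 * Real.pi * d ^ 2 * (pstar - 1) * (1 + x ^ 4 + y ^ 4) * |t - s| := by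
    have hy4 : (0:ℝ) ≤ y ^ 4 := by positivity
    linarith [mul_le_mul_of_nonneg_left hD2 (mul_nonneg hK hy4),
      mul_nonneg (mul_nonneg hK hT) (by positivity : (0:ℝ) ≤ 1 + x ^ 4)]
  -- Square inequality
  have c4 : (pstar - 1) * (c * (x - y) + d * (1 + u) * (x ^ 2 - y ^ 2) + d * y ^ 2 * (u - v)) ^ 2
      ≤ 3 * (pstar - 1) * (c * (x - y)) ^ 2
        + 3 * (pstar - 1) * (d * (1 + u) * (x ^ 2 - y ^ 2)) ^ 2
        + 3 * (pstar - 1) * (d * y ^ 2 * (u - v)) ^ 2 := by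
    linarith [mul_nonneg hp0 (sq_nonneg (c * (x - y) - d * (1 + u) * (x ^ 2 - y ^ 2))),
      mul_nonneg hp0 (sq_nonneg (c * (x - y) - d * y ^ 2 * (u - v))),
      mul_nonneg hp0 (sq_nonneg (d * (1 + u) * (x ^ 2 - y ^ 2) - d * y ^ 2 * (u - v)))]
  linarith [c1, c2, c3, c4]
end
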